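/- Lower bound for χ_l(K_n, c): Let q be a prime power and let c be a positive integer with c < q − 1 and c dividing q − 1, and let n be an integer with n ≥ (q² − 1)/c + 2. Then χ_l(K_n, c) ≥ q + 1; that is, there exists a list assignment L : Fin n → Finset ℕ with |L(v)| = q for every vertex v and |L(u) ∩ L(v)| ≤ c for all distinct u ≠ v, such that no injective function f : Fin n → ℕ satisfies f(v) ∈ L(v) for every v. -/

import Mathlib

open Finset

set_option linter.unusedSectionVars false
namespace ChiAux

variable {F : Type} [Field F] [Fintype F] [DecidableEq F]

/-- scalar multiplication on the plane -/
def sc (l : F) (v : F × F) : F × F := (l * v.1, l * v.2)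

/-- the dot-product bilinear form -/
def bform (a v : F × F) : F := a.1 * v.1 + a.2 * v.2

/-- the affine line { v : ⟨a,v⟩ = 1 } (a line not through the origin, for a ≠ 0) -/
def lineF (a : F × F) : Finset (F × F) := Finset.univ.filter (fun v => bform a v = 1)

lemma mem_lineF {a v : F × F} : v ∈ lineF a ↔ bform a v = 1 := by
  simp [lineF]

lemma sc_sc (l m : F) (v : F × F) : sc l (sc m v) = sc (l * m) v := by
  simp [sc]; constructor <;> ring

lemma sc_one (v : F × F) : sc 1 v = v := by simp [sc]

lemma sc_zero (l : F) : sc l (0 : F × F) = 0 := by simp [sc]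

lemma sc_ne_zero {l : F} {v : F × F} (hl : l ≠ 0) (hv : v ≠ 0) : sc l v ≠ 0 := by
  intro h
  apply hv
  have h1 : l * v.1 = 0 := congrArg Prod.fst h
  have h2 : l * v.2 = 0 := congrArg Prod.snd h
  have e1 := (mul_eq_zero.1 h1).resolve_left hl
  have e2 := (mul_eq_zero.1 h2).resolve_left hl
  exact Prod.ext e1 e2

lemma sc_inj {l : F} {v w : F × F} (hl : l ≠ 0) (h : sc l v = sc l w) : v = w := by
  have h1 : l * v.1 = l * w.1 := congrArg Prod.fst h
  have h2 : l * v.2 = l * w.2 := congrArg Prod.snd h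
  exact Prod.ext (mul_left_cancel₀ hl h1) (mul_left_cancel₀ hl h2)

lemma sc_eq_self_iff {v : F × F} (hv : v ≠ 0) {l m : F} (h : sc l v = sc m v) : l = m := by
  have h1 : l * v.1 = m * v.1 := congrArg Prod.fst h
  have h2 : l * v.2 = m * v.2 := congrArg Prod.snd h
  rcases Prod.mk.injEq _ _ _ _ ▸ (fun hh : v = 0 => hv hh) with _
  by_cases hv1 : v.1 = 0
  · have hv2 : v.2 ≠ 0 := by
      intro hv2; exact hv (Prod.ext hv1 hv2)
    exact mul_right_cancel₀ hv2 h2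
  · exact mul_right_cancel₀ hv1 h1

lemma bform_sc (a : F × F) (l : F) (v : F × F) : bform a (sc l v) = l * bform a v := by
  simp [bform, sc]; ring

lemma bform_sc_left (a : F × F) (l : F) (v : F × F) : bform (sc l a) v = l * bform a v := by
  simp [bform, sc]; ring

lemma zero_not_mem_lineF (a : F × F) : (0 : F × F) ∉ lineF a := by
  simp [mem_lineF, bform]

/-- Two distinct lines of the form ⟨a,·⟩=1 meet in at most one point. -/
lemma two_lines {a b v w : F × F} (hab : a ≠ b) (h1 : bform a v = 1) (h2 : bform b v = 1)
    (h3 : bform a w = 1) (h4 : bform b w = 1) : v = w := by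
  by_contra hvw
  simp only [bform] at h1 h2 h3 h4
  have hdet : a.1 * b.2 - a.2 * b.1 = 0 := by
    have hu : v.1 - w.1 ≠ 0 ∨ v.2 - w.2 ≠ 0 := by
      by_contra hcon
      push_neg at hcon
      exact hvw (Prod.ext (sub_eq_zero.mp hcon.1) (sub_eq_zero.mp hcon.2))
    rcases hu with hu | hu
    · have e : (a.1 * b.2 - a.2 * b.1) * (v.1 - w.1) = 0 := by linear_combination b.2 * h1 - b.2 * h3 - a.2 * h2 + a.2 * h4
      exact (mul_eq_zero.1 e).resolve_right hu
    · have e : (a.1 * b.2 - a.2 * b.1) * (v.2 - w.2) = 0 := by linear_combination a.1 * h2 - a.1 * h4 - b.1 * h1 + b.1 * h3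
      exact (mul_eq_zero.1 e).resolve_right hu
  apply hab
  have e1 : a.1 = b.1 := by linear_combination b.1 * h1 - a.1 * h2 + v.2 * hdet
  have e2 : a.2 = b.2 := by linear_combination b.2 * h1 - a.2 * h2 - v.1 * hdet
  exact Prod.ext e1 e2

/-- A line not through the origin has exactly `|F|` points. -/
lemma card_lineF {a : F × F} (ha : a ≠ 0) : (lineF a).card = Fintype.card F := by
  by_cases h1 : a.1 = 0
  · have h2 : a.2 ≠ 0 := by
      intro h2; exact ha (Prod.ext h1 h2)
    rw [← Finset.card_univ]
    apply Finset.card_nbij' (i := fun v => v.1) (j := fun x => (x, (1 - a.1 * x) * a.2⁻¹))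
    · intro v _; exact Finset.mem_univ _
    · intro x _
      rw [Finset.mem_coe, mem_lineF]; simp only [bform]; field_simp; ring
    · intro v hv
      rw [Finset.mem_coe, mem_lineF] at hv
      simp only [bform] at hv
      refine Prod.ext rfl ?_
      simp only
      field_simp
      linear_combination -hv
    · intro x _; rfl
  · rw [← Finset.card_univ]
    apply Finset.card_nbij' (i := fun v => v.2) (j := fun y => ((1 - a.2 * y) * a.1⁻¹, y))
    · intro v _; exact Finset.mem_univ _
    · intro y _
      rw [Finset.mem_coe, mem_lineF]; simp only [bform]; field_simp; ring
    · intro v hv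
      rw [Finset.mem_coe, mem_lineF] at hv
      simp only [bform] at hv
      refine Prod.ext ?_ rfl
      simp only
      field_simp
      linear_combination -hv
    · intro y _; rfl


/-! ### Orbits of a finite multiplicative subgroup acting on the punctured plane -/

def orb (H : Finset Fˣ) (v : F × F) : Finset (F × F) := H.image fun l => sc l.val v

noncomputable def vlo : LinearOrder (F × F) :=
  LinearOrder.lift' (Fintype.equivFin (F × F)) (Equiv.injective _)

attribute [local instance] vlo

/-- canonical representative of the orbit of `v` -/
noncomputable def rep (H : Finset Fˣ) (v : F × F) : F × F :=
  (insert v (orb H v)).min' (Finset.insert_nonempty _ _)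

/-- the orbit relation -/
def srel (H : Finset Fˣ) (v w : F × F) : Prop := ∃ l ∈ H, w = sc l.val v

variable (H : Finset Fˣ)

lemma sc_units (a b : Fˣ) (v : F × F) :
    sc (a : F) (sc (b : F) v) = sc ((a * b : Fˣ) : F) v := by
  rw [sc_sc, Units.val_mul]

lemma srel_refl (h1H : (1 : Fˣ) ∈ H) (v : F × F) : srel H v v :=
  ⟨1, h1H, by simp [sc_one]⟩

lemma srel_symm (hinv : ∀ a ∈ H, a⁻¹ ∈ H) {v w : F × F} (h : srel H v w) : srel H w v := by
  obtain ⟨l, hl, rfl⟩ := h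
  refine ⟨l⁻¹, hinv l hl, ?_⟩
  rw [sc_units]
  simp [sc_one]

lemma srel_trans (hmul : ∀ a ∈ H, ∀ b ∈ H, a * b ∈ H) {u v w : F × F}
    (h : srel H u v) (h' : srel H v w) : srel H u w := by
  obtain ⟨l, hl, rfl⟩ := h
  obtain ⟨m, hm, rfl⟩ := h'
  exact ⟨m * l, hmul m hm l hl, by rw [sc_units]⟩

lemma mem_orb_iff_srel {v w : F × F} : w ∈ orb H v ↔ srel H v w := by
  simp [orb, srel, eq_comm]

lemma orb_eq_of_srel (hmul : ∀ a ∈ H, ∀ b ∈ H, a * b ∈ H) (hinv : ∀ a ∈ H, a⁻¹ ∈ H)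
    {v w : F × F} (h : srel H v w) : orb H v = orb H w := by
  obtain ⟨l, hl, rfl⟩ := h
  apply Finset.ext
  intro x
  rw [mem_orb_iff_srel, mem_orb_iff_srel]
  constructor
  · intro hx
    obtain ⟨m, hm, rfl⟩ := hx
    refine ⟨m * l⁻¹, hmul m hm _ (hinv l hl), ?_⟩
    rw [sc_units]
    norm_num
  · intro hx
    obtain ⟨m, hm, rfl⟩ := hx
    exact ⟨m * l, hmul m hm l hl, by rw [sc_units]⟩

lemma self_mem_orb (h1H : (1 : Fˣ) ∈ H) (v : F × F) : v ∈ orb H v :=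
  (mem_orb_iff_srel H).2 (srel_refl H h1H v)

lemma insert_orb (h1H : (1 : Fˣ) ∈ H) (v : F × F) : insert v (orb H v) = orb H v :=
  Finset.insert_eq_self.2 (self_mem_orb H h1H v)

lemma rep_mem_orb (h1H : (1 : Fˣ) ∈ H) (v : F × F) : rep H v ∈ orb H v := by
  have h := (insert v (orb H v)).min'_mem (Finset.insert_nonempty _ _)
  rcases Finset.mem_insert.1 h with h' | h'
  · rw [rep, h']
    exact self_mem_orb H h1H v
  · exact h'

lemma srel_rep (h1H : (1 : Fˣ) ∈ H) (v : F × F) : srel H v (rep H v) :=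
  (mem_orb_iff_srel H).1 (rep_mem_orb H h1H v)

lemma rep_eq_of_srel (h1H : (1 : Fˣ) ∈ H) (hmul : ∀ a ∈ H, ∀ b ∈ H, a * b ∈ H)
    (hinv : ∀ a ∈ H, a⁻¹ ∈ H) {v w : F × F} (h : srel H v w) : rep H v = rep H w := by
  unfold rep
  congr 1
  rw [insert_orb H h1H, insert_orb H h1H]
  exact orb_eq_of_srel H hmul hinv h

lemma srel_of_rep_eq (h1H : (1 : Fˣ) ∈ H) (hmul : ∀ a ∈ H, ∀ b ∈ H, a * b ∈ H)
    (hinv : ∀ a ∈ H, a⁻¹ ∈ H) {v w : F × F} (h : rep H v = rep H w) : srel H v w := by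
  have hv := srel_rep H h1H v
  have hw := srel_rep H h1H w
  rw [h] at hv
  exact srel_trans H hmul hv (srel_symm H hinv hw)

lemma rep_zero (h1H : (1 : Fˣ) ∈ H) : rep H 0 = (0 : F × F) := by
  have := rep_mem_orb H h1H (0 : F × F)
  rw [mem_orb_iff_srel] at this
  obtain ⟨l, _, hl⟩ := this
  rw [hl, sc_zero]

lemma rep_ne_zero (h1H : (1 : Fˣ) ∈ H) {v : F × F} (hv : v ≠ 0) : rep H v ≠ 0 := by
  obtain ⟨l, _, hl⟩ := srel_rep H h1H v
  rw [hl]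
  exact sc_ne_zero (Units.ne_zero l) hv

lemma rep_rep (h1H : (1 : Fˣ) ∈ H) (hmul : ∀ a ∈ H, ∀ b ∈ H, a * b ∈ H)
    (hinv : ∀ a ∈ H, a⁻¹ ∈ H) (v : F × F) : rep H (rep H v) = rep H v :=
  (rep_eq_of_srel H h1H hmul hinv (srel_rep H h1H v)).symm

lemma card_orb {v : F × F} (hv : v ≠ 0) : (orb H v).card = H.card := by
  rw [orb]
  apply Finset.card_image_of_injOn
  intro a _ b _ hab
  exact Units.ext (sc_eq_self_iff hv hab)

/-- fiberwise counting: a `0`-avoiding, `H`-stable set has size `(number of orbits) * |H|`. -/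
lemma card_eq_card_image_rep_mul (h1H : (1 : Fˣ) ∈ H) (hmul : ∀ a ∈ H, ∀ b ∈ H, a * b ∈ H)
    (hinv : ∀ a ∈ H, a⁻¹ ∈ H) (s : Finset (F × F)) (h0 : (0 : F × F) ∉ s)
    (hcl : ∀ v ∈ s, ∀ l ∈ H, sc l.val v ∈ s) :
    s.card = (s.image (rep H)).card * H.card := by
  rw [Finset.card_eq_sum_card_fiberwise (f := rep H) (t := s.image (rep H))
    (fun x hx => Finset.mem_image_of_mem _ hx)]
  rw [Finset.sum_congr rfl (g := fun _ => H.card), Finset.sum_const, smul_eq_mul]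
  intro b hb
  obtain ⟨v, hv, rfl⟩ := Finset.mem_image.1 hb
  have hfil : s.filter (fun w => rep H w = rep H v) = orb H v := by
    apply Finset.ext
    intro w
    rw [Finset.mem_filter, mem_orb_iff_srel]
    constructor
    · intro ⟨_, hw⟩
      exact srel_of_rep_eq H h1H hmul hinv hw.symm
    · intro hw
      obtain ⟨l, hl, rfl⟩ := hw
      exact ⟨hcl v hv l hl, (rep_eq_of_srel H h1H hmul hinv ⟨l, hl, rfl⟩).symm⟩
  rw [hfil, card_orb H (fun h => h0 (h ▸ hv))]


/-! ### The lists -/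

noncomputable def enc : F × F → ℕ := fun v => (Fintype.equivFin (F × F) v : ℕ)

lemma enc_inj : Function.Injective (enc (F := F)) := by
  intro v w h
  have := Fin.ext h
  exact (Fintype.equivFin (F × F)).injective this

lemma enc_lt (v : F × F) : enc v < Fintype.card (F × F) := (Fintype.equivFin (F × F) v).isLt

/-- encoded representative of a point -/
noncomputable def pe (H : Finset Fˣ) : F × F → ℕ := fun v => enc (rep H v)

def sstar (F' : Type) [Fintype F'] : ℕ := Fintype.card (F' × F')

lemma pe_lt (v : F × F) : pe H v < sstar F := enc_lt _

lemma pe_eq_iff (h1H : (1 : Fˣ) ∈ H) (hmul : ∀ a ∈ H, ∀ b ∈ H, a * b ∈ H)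
    (hinv : ∀ a ∈ H, a⁻¹ ∈ H) {v w : F × F} :
    pe H v = pe H w ↔ srel H v w := by
  constructor
  · intro h
    exact srel_of_rep_eq H h1H hmul hinv (enc_inj h)
  · intro h
    exact congrArg enc (rep_eq_of_srel H h1H hmul hinv h)

/-- the list attached to the line `⟨r,·⟩ = 1` -/
noncomputable def Lline (H : Finset Fˣ) (r : F × F) : Finset ℕ := (lineF r).image (pe H)

/-- the punctured line through the origin with direction `(1, y)` -/
def dirline (y : F) : Finset (F × F) := Finset.univ.image (fun m : Fˣ => sc m.val (1, y))

noncomputable def Ddir (H : Finset Fˣ) (y : F) : Finset ℕ := (dirline y).image (pe H)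

noncomputable def Aset (H : Finset Fˣ) (S : Finset F) : Finset ℕ :=
  insert (sstar F) (S.biUnion (Ddir H))

lemma mem_dirline {y : F} {v : F × F} : v ∈ dirline y ↔ ∃ m : Fˣ, v = sc m.val (1, y) := by
  simp [dirline, eq_comm]

lemma zero_not_mem_dirline (y : F) : (0 : F × F) ∉ dirline y := by
  rw [mem_dirline]
  rintro ⟨m, hm⟩
  exact sc_ne_zero (Units.ne_zero m) (fun h => one_ne_zero (congrArg Prod.fst h)) hm.symm

lemma pe_injOn_lineF (h1H : (1 : Fˣ) ∈ H) (hmul : ∀ a ∈ H, ∀ b ∈ H, a * b ∈ H)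
    (hinv : ∀ a ∈ H, a⁻¹ ∈ H) (r : F × F) :
    Set.InjOn (pe H) (lineF r) := by
  intro v hv w hw h
  rw [Finset.mem_coe, mem_lineF] at hv hw
  obtain ⟨l, _, rfl⟩ := (pe_eq_iff H h1H hmul hinv).1 h
  rw [bform_sc, hv, mul_one] at hw
  rw [hw, sc_one]

lemma card_Lline (h1H : (1 : Fˣ) ∈ H) (hmul : ∀ a ∈ H, ∀ b ∈ H, a * b ∈ H)
    (hinv : ∀ a ∈ H, a⁻¹ ∈ H) {r : F × F} (hr : r ≠ 0) :
    (Lline H r).card = Fintype.card F := by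
  rw [Lline, Finset.card_image_of_injOn (pe_injOn_lineF H h1H hmul hinv r), card_lineF hr]

/-- two lists coming from inequivalent lines share at most `|H|` colors -/
lemma card_Lline_inter_le (h1H : (1 : Fˣ) ∈ H) (hmul : ∀ a ∈ H, ∀ b ∈ H, a * b ∈ H)
    (hinv : ∀ a ∈ H, a⁻¹ ∈ H) {r r' : F × F} (hr : rep H r = r) (hr' : rep H r' = r')
    (hne : r ≠ r') : (Lline H r ∩ Lline H r').card ≤ H.card := by
  classical
  have key : ∀ n ∈ Lline H r ∩ Lline H r',
      ∃ l, l ∈ H ∧ ∃ v, v ∈ lineF r ∧ pe H v = n ∧ sc l.val v ∈ lineF r' := by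
    intro n hn
    rw [Finset.mem_inter, Lline, Lline, Finset.mem_image, Finset.mem_image] at hn
    obtain ⟨⟨v, hv, hvn⟩, ⟨w, hw, hwn⟩⟩ := hn
    have hsrel : srel H v w := (pe_eq_iff H h1H hmul hinv).1 (hvn.trans hwn.symm)
    obtain ⟨l, hl, rfl⟩ := hsrel
    exact ⟨l, hl, v, hv, hvn, hw⟩
  choose! l hl v hv hpe hsc using key
  apply Finset.card_le_card_of_injOn l hl
  intro n hn n' hn' heq
  have hn₀ := hn
  have hn'₀ := hn'
  rw [Finset.mem_coe] at hn hn'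
  have hbv : bform r (v n) = 1 := mem_lineF.1 (hv n hn)
  have hbv' : bform r (v n') = 1 := mem_lineF.1 (hv n' hn')
  have ha2 : bform (sc (l n).val r') (v n) = 1 := by
    rw [bform_sc_left]
    have := mem_lineF.1 (hsc n hn)
    rw [bform_sc] at this
    exact this
  have ha2' : bform (sc (l n).val r') (v n') = 1 := by
    rw [bform_sc_left]
    have := mem_lineF.1 (hsc n' hn')
    rw [bform_sc, ← heq] at this
    exact this
  have hrne : r ≠ sc (l n).val r' := by
    intro hcon
    have : srel H r' r := ⟨l n, hl n hn, hcon⟩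
    have := rep_eq_of_srel H h1H hmul hinv this
    rw [hr, hr'] at this
    exact hne this.symm
  have hveq : v n = v n' := two_lines hrne hbv ha2 hbv' ha2'
  rw [← hpe n hn, ← hpe n' hn', hveq]

/-- a list meets a punctured line through the origin in at most one color -/
lemma card_Lline_inter_Ddir_le (h1H : (1 : Fˣ) ∈ H) (hmul : ∀ a ∈ H, ∀ b ∈ H, a * b ∈ H)
    (hinv : ∀ a ∈ H, a⁻¹ ∈ H) (r : F × F) (y : F) :
    (Lline H r ∩ Ddir H y).card ≤ 1 := by
  rw [Finset.card_le_one]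
  have key : ∀ n ∈ Lline H r ∩ Ddir H y,
      ∃ v, v ∈ lineF r ∧ pe H v = n ∧ ∃ m : F, m ≠ 0 ∧ v = sc m (1, y) := by
    intro n hn
    rw [Finset.mem_inter, Lline, Ddir, Finset.mem_image, Finset.mem_image] at hn
    obtain ⟨⟨w, hw, hwn⟩, ⟨u, hu, hun⟩⟩ := hn
    obtain ⟨m, rfl⟩ := mem_dirline.1 hu
    have hsrel : srel H w (sc m.val (1, y)) := (pe_eq_iff H h1H hmul hinv).1 (hwn.trans hun.symm)
    obtain ⟨l, hlH, hl⟩ := hsrel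
    have : w = sc ((l⁻¹ * m : Fˣ) : F) (1, y) := by
      rw [← sc_units, hl, sc_units]
      norm_num [sc_one]
    exact ⟨w, hw, hwn, ((l⁻¹ * m : Fˣ) : F), Units.ne_zero _, this⟩
  intro n hn n' hn'
  obtain ⟨w, hw, hwn, m, hm0, rfl⟩ := key n hn
  obtain ⟨w', hw', hwn', m', hm0', rfl⟩ := key n' hn'
  have h1 : m * bform r (1, y) = 1 := by rw [← bform_sc]; exact mem_lineF.1 hw
  have h2 : m' * bform r (1, y) = 1 := by rw [← bform_sc]; exact mem_lineF.1 hw'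
  have hB : bform r (1, y) ≠ 0 := by
    intro h
    rw [h, mul_zero] at h1
    exact one_ne_zero h1.symm
  have : m = m' := mul_right_cancel₀ hB (h1.trans h2.symm)
  rw [← hwn, ← hwn', this]

lemma Ddir_disjoint (h1H : (1 : Fˣ) ∈ H) (hmul : ∀ a ∈ H, ∀ b ∈ H, a * b ∈ H)
    (hinv : ∀ a ∈ H, a⁻¹ ∈ H) {y y' : F} (hne : y ≠ y') :
    Disjoint (Ddir H y) (Ddir H y') := by
  rw [Finset.disjoint_left]
  intro n hn hn'
  rw [Ddir, Finset.mem_image] at hn hn'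
  obtain ⟨u, hu, hun⟩ := hn
  obtain ⟨u', hu', hun'⟩ := hn'
  obtain ⟨m, rfl⟩ := mem_dirline.1 hu
  obtain ⟨m', rfl⟩ := mem_dirline.1 hu'
  have hsrel := (pe_eq_iff H h1H hmul hinv).1 (hun.trans hun'.symm)
  obtain ⟨l, hlH, hl⟩ := hsrel
  have hfst : (m' : F) * (1 : F) = (l : F) * ((m : F) * 1) := congrArg Prod.fst hl
  have hsnd : (m' : F) * y' = (l : F) * ((m : F) * y) := congrArg Prod.snd hl
  rw [mul_one, mul_one] at hfst
  have hlm0 : (l : F) * (m : F) ≠ 0 := mul_ne_zero (Units.ne_zero l) (Units.ne_zero m)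
  apply hne
  apply mul_left_cancel₀ hlm0
  rw [mul_assoc, ← hsnd, hfst]


/-! ### Counting -/

lemma card_dirline (y : F) : (dirline y).card = Fintype.card F - 1 := by
  rw [dirline, Finset.card_image_of_injOn, Finset.card_univ, Fintype.card_units]
  intro a _ b _ hab
  have hd : ((1 : F), y) ≠ 0 := fun h => one_ne_zero (congrArg Prod.fst h)
  exact Units.ext (sc_eq_self_iff hd hab)

lemma dirline_closed (y : F) : ∀ v ∈ dirline y, ∀ l ∈ H, sc l.val v ∈ dirline y := by
  intro v hv l _
  obtain ⟨m, rfl⟩ := mem_dirline.1 hv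
  rw [sc_units]
  exact mem_dirline.2 ⟨l * m, rfl⟩

lemma card_Ddir_mul (h1H : (1 : Fˣ) ∈ H) (hmul : ∀ a ∈ H, ∀ b ∈ H, a * b ∈ H)
    (hinv : ∀ a ∈ H, a⁻¹ ∈ H) (y : F) :
    (Ddir H y).card * H.card = Fintype.card F - 1 := by
  have h := card_eq_card_image_rep_mul H h1H hmul hinv (dirline y)
    (zero_not_mem_dirline y) (dirline_closed H y)
  rw [card_dirline] at h
  have himg : Ddir H y = ((dirline y).image (rep H)).image enc := by
    rw [Ddir, Finset.image_image]
    rfl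
  rw [himg, Finset.card_image_of_injective _ enc_inj]
  exact h.symm

lemma card_Ddir (h1H : (1 : Fˣ) ∈ H) (hmul : ∀ a ∈ H, ∀ b ∈ H, a * b ∈ H)
    (hinv : ∀ a ∈ H, a⁻¹ ∈ H) (y : F) :
    (Ddir H y).card = (Fintype.card F - 1) / H.card := by
  have h0 : 0 < H.card := Finset.card_pos.2 ⟨1, h1H⟩
  rw [← card_Ddir_mul H h1H hmul hinv y, Nat.mul_div_cancel _ h0]

/-- the ground set of colors actually used (besides the star) -/
noncomputable def Upts (H : Finset Fˣ) : Finset ℕ :=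
  (Finset.univ.erase (0 : F × F)).image (pe H)

lemma card_Upts_mul (h1H : (1 : Fˣ) ∈ H) (hmul : ∀ a ∈ H, ∀ b ∈ H, a * b ∈ H)
    (hinv : ∀ a ∈ H, a⁻¹ ∈ H) :
    (Upts H).card * H.card = Fintype.card (F × F) - 1 := by
  have h := card_eq_card_image_rep_mul H h1H hmul hinv (Finset.univ.erase (0 : F × F))
    (Finset.notMem_erase _ _) ?_
  · rw [Finset.card_erase_of_mem (Finset.mem_univ _), Finset.card_univ] at h
    have himg : Upts H = ((Finset.univ.erase (0 : F × F)).image (rep H)).image enc := by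
      rw [Upts, Finset.image_image]
      rfl
    rw [himg, Finset.card_image_of_injective _ enc_inj]
    exact h.symm
  · intro v hv l _
    rw [Finset.mem_erase] at hv ⊢
    exact ⟨sc_ne_zero (Units.ne_zero l) hv.1, Finset.mem_univ _⟩

lemma sstar_not_mem_Upts : sstar F ∉ Upts H := by
  rw [Upts]
  intro h
  obtain ⟨v, _, hv⟩ := Finset.mem_image.1 h
  exact absurd hv (Nat.ne_of_lt (pe_lt H v))

lemma Lline_subset_Upts (r : F × F) : Lline H r ⊆ Upts H := by
  apply Finset.image_subset_image
  intro v hv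
  rw [Finset.mem_erase]
  exact ⟨fun h => zero_not_mem_lineF r (h ▸ hv), Finset.mem_univ _⟩

lemma Ddir_subset_Upts (y : F) : Ddir H y ⊆ Upts H := by
  apply Finset.image_subset_image
  intro v hv
  rw [Finset.mem_erase]
  exact ⟨fun h => zero_not_mem_dirline y (h ▸ hv), Finset.mem_univ _⟩

lemma Aset_subset_insert (S : Finset F) : Aset H S ⊆ insert (sstar F) (Upts H) := by
  rw [Aset]
  apply Finset.insert_subset_insert
  intro n hn
  obtain ⟨y, _, hy⟩ := Finset.mem_biUnion.1 hn
  exact Ddir_subset_Upts H y hy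

lemma sstar_not_mem_biUnion (S : Finset F) : sstar F ∉ S.biUnion (Ddir H) := by
  intro h
  obtain ⟨y, _, hy⟩ := Finset.mem_biUnion.1 h
  exact sstar_not_mem_Upts H (Ddir_subset_Upts H y hy)

lemma card_Aset (h1H : (1 : Fˣ) ∈ H) (hmul : ∀ a ∈ H, ∀ b ∈ H, a * b ∈ H)
    (hinv : ∀ a ∈ H, a⁻¹ ∈ H) (S : Finset F) :
    (Aset H S).card = S.card * ((Fintype.card F - 1) / H.card) + 1 := by
  rw [Aset, Finset.card_insert_of_notMem (sstar_not_mem_biUnion H S),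
    Finset.card_biUnion, Finset.sum_congr rfl
      (fun y _ => card_Ddir H h1H hmul hinv y), Finset.sum_const, smul_eq_mul]
  intro y _ y' _ hne
  exact Ddir_disjoint H h1H hmul hinv hne

lemma Lline_inter_Aset_le (h1H : (1 : Fˣ) ∈ H) (hmul : ∀ a ∈ H, ∀ b ∈ H, a * b ∈ H)
    (hinv : ∀ a ∈ H, a⁻¹ ∈ H) (r : F × F) (S : Finset F) :
    (Lline H r ∩ Aset H S).card ≤ S.card := by
  have hsub : Lline H r ∩ Aset H S ⊆ S.biUnion (fun y => Lline H r ∩ Ddir H y) := by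
    intro n hn
    rw [Finset.mem_inter, Aset, Finset.mem_insert] at hn
    obtain ⟨hnl, hns | hns⟩ := hn
    · exact absurd (hns ▸ Lline_subset_Upts H r hnl) (sstar_not_mem_Upts H)
    · obtain ⟨y, hy, hyn⟩ := Finset.mem_biUnion.1 hns
      exact Finset.mem_biUnion.2 ⟨y, hy, Finset.mem_inter.2 ⟨hnl, hyn⟩⟩
  calc (Lline H r ∩ Aset H S).card ≤ (S.biUnion (fun y => Lline H r ∩ Ddir H y)).card :=
        Finset.card_le_card hsub
    _ ≤ ∑ y ∈ S, (Lline H r ∩ Ddir H y).card := Finset.card_biUnion_le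
    _ ≤ ∑ _y ∈ S, 1 := Finset.sum_le_sum
        (fun y _ => card_Lline_inter_Ddir_le H h1H hmul hinv r y)
    _ = S.card := by simp

lemma Aset_inter_Aset_le (h1H : (1 : Fˣ) ∈ H) (hmul : ∀ a ∈ H, ∀ b ∈ H, a * b ∈ H)
    (hinv : ∀ a ∈ H, a⁻¹ ∈ H) {S S' : Finset F} (hSS : Disjoint S S') :
    (Aset H S ∩ Aset H S').card ≤ 1 := by
  have hsub : Aset H S ∩ Aset H S' ⊆ {sstar F} := by
    intro n hn
    rw [Finset.mem_inter, Aset, Aset, Finset.mem_insert, Finset.mem_insert] at hn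
    rw [Finset.mem_singleton]
    obtain ⟨h1 | h1, h2 | h2⟩ := hn
    any_goals assumption
    obtain ⟨y, hy, hyn⟩ := Finset.mem_biUnion.1 h1
    obtain ⟨y', hy', hyn'⟩ := Finset.mem_biUnion.1 h2
    have hne : y ≠ y' := fun h => (Finset.disjoint_left.1 hSS) hy (h ▸ hy')
    exact absurd hyn' (Finset.disjoint_left.1 (Ddir_disjoint H h1H hmul hinv hne) hyn)
  calc (Aset H S ∩ Aset H S').card ≤ ({sstar F} : Finset ℕ).card := Finset.card_le_card hsub
    _ = 1 := Finset.card_singleton _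


/-! ### Assembly -/

def getR (L : List (F × F)) (i : ℕ) : F × F := if h : i < L.length then L[i] else (1, 1)

lemma getR_mem {L : List (F × F)} {i : ℕ} (h : i < L.length) : getR L i ∈ L := by
  rw [getR, dif_pos h]
  exact List.getElem_mem h

lemma getR_inj {L : List (F × F)} (hnd : L.Nodup) {i j : ℕ} (hi : i < L.length)
    (hj : j < L.length) (h : getR L i = getR L j) : i = j := by
  rw [getR, dif_pos hi, getR, dif_pos hj] at h
  exact (List.Nodup.getElem_inj_iff hnd).1 h

/-- fresh pairwise disjoint lists for the remaining vertices -/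
def frs (F' : Type) [Fintype F'] (i : ℕ) : Finset ℕ :=
  (Finset.range (Fintype.card F')).image (fun j => sstar F' + 1 + Fintype.card F' * i + j)

lemma card_frs (i : ℕ) : (frs F i).card = Fintype.card F := by
  rw [frs, Finset.card_image_of_injective _ (add_right_injective _), Finset.card_range]

lemma frs_elem_big {i n : ℕ} (h : n ∈ frs F i) : sstar F < n := by
  rw [frs, Finset.mem_image] at h
  obtain ⟨j, _, rfl⟩ := h
  omega

lemma frs_disjoint {i j : ℕ} (hij : i ≠ j) : Disjoint (frs F i) (frs F j) := by
  rw [Finset.disjoint_left]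
  intro n hn hn'
  rw [frs, Finset.mem_image] at hn hn'
  obtain ⟨a, ha, han⟩ := hn
  obtain ⟨b, hb, hbn⟩ := hn'
  rw [Finset.mem_range] at ha hb
  have hq : 0 < Fintype.card F := Fintype.card_pos
  apply hij
  have : Fintype.card F * i + a = Fintype.card F * j + b := by omega
  have h1 := congrArg (· / Fintype.card F) this
  simpa [Nat.mul_add_div hq, Nat.div_eq_of_lt ha, Nat.div_eq_of_lt hb] using h1

lemma mem_insert_le {n : ℕ} (h : n ∈ insert (sstar F) (Upts H)) : n ≤ sstar F := by
  rcases Finset.mem_insert.1 h with h | h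
  · omega
  · obtain ⟨v, _, hv⟩ := Finset.mem_image.1 h
    exact le_of_lt (hv ▸ pe_lt H v)

/-- The main construction over an arbitrary finite field. -/
lemma construction (c n : ℕ) (hc : 0 < c)
    (H : Finset Fˣ) (h1H : (1 : Fˣ) ∈ H)
    (hmul : ∀ a ∈ H, ∀ b ∈ H, a * b ∈ H) (hinv : ∀ a ∈ H, a⁻¹ ∈ H)
    (hHcard : H.card = c) (hdvd : c ∣ Fintype.card F - 1)
    (h2c : 2 * c ≤ Fintype.card F)
    (hn : (Fintype.card F ^ 2 - 1) / c + 2 ≤ n) :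
    ∃ L : Fin n → Finset ℕ,
      (∀ v, (L v).card = Fintype.card F) ∧
      (∀ u v, u ≠ v → ((L u) ∩ (L v)).card ≤ c) ∧
      ¬ ∃ f : Fin n → ℕ, Function.Injective f ∧ ∀ v, f v ∈ L v := by
  classical
  set q := Fintype.card F with hqdef
  have hq0 : 0 < q := Fintype.card_pos
  set N := (Upts H).card with hNdef
  have hNc : N * c = q ^ 2 - 1 := by
    rw [hNdef, ← hHcard]
    rw [card_Upts_mul H h1H hmul hinv]
    congr 1
    rw [Fintype.card_prod, sq]
  have hNval : N = (q ^ 2 - 1) / c := Nat.eq_div_of_mul_eq_left hc.ne' hNc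
  have hnN : N + 2 ≤ n := by rw [hNval]; exact hn
  obtain ⟨S, hSsub, hScard⟩ := Finset.exists_subset_card_eq
    (s := (Finset.univ : Finset F)) (n := c) (by rw [Finset.card_univ]; omega)
  obtain ⟨S', hS'sub, hS'card⟩ := Finset.exists_subset_card_eq
    (s := (Finset.univ : Finset F) \ S) (n := c)
    (by rw [Finset.card_sdiff_of_subset hSsub, Finset.card_univ, hScard]; omega)
  have hSS' : Disjoint S S' := by
    rw [Finset.disjoint_left]
    intro a ha ha'
    exact (Finset.mem_sdiff.1 (hS'sub ha')).2 ha
  set R : Finset (F × F) := (Finset.univ.erase (0 : F × F)).image (rep H) with hRdef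
  have hRcard : R.card = N := by
    rw [hNdef, Upts, hRdef]
    have : (Finset.univ.erase (0 : F × F)).image (pe H)
        = ((Finset.univ.erase (0 : F × F)).image (rep H)).image enc := by
      rw [Finset.image_image]; rfl
    rw [this, Finset.card_image_of_injective _ enc_inj]
  have hRmem : ∀ x ∈ R, x ≠ 0 ∧ rep H x = x := by
    intro x hx
    obtain ⟨v, hv, rfl⟩ := Finset.mem_image.1 hx
    rw [Finset.mem_erase] at hv
    exact ⟨rep_ne_zero H h1H hv.1, rep_rep H h1H hmul hinv v⟩
  set RL := R.toList with hRLdef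
  have hRLlen : RL.length = N := by rw [hRLdef, Finset.length_toList, hRcard]
  have hRLnd : RL.Nodup := Finset.nodup_toList R
  have hRLmem : ∀ {i : ℕ}, i < N → getR RL i ∈ R := by
    intro i hi
    rw [← Finset.mem_toList, ← hRLdef]
    exact getR_mem (by rw [hRLlen]; exact hi)
  set g : ℕ → Finset ℕ := fun i =>
    if i < N then Lline H (getR RL i)
    else if i = N then Aset H S
    else if i = N + 1 then Aset H S' else frs F i with hgdef
  have hgl : ∀ i, i < N → g i = Lline H (getR RL i) := by
    intro i hi
    rw [hgdef]; simp only; rw [if_pos hi]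
  have hgS : g N = Aset H S := by
    rw [hgdef]; simp only; rw [if_neg (by omega)]; simp
  have hgS' : g (N + 1) = Aset H S' := by
    rw [hgdef]; simp only
    rw [if_neg (by omega), if_neg (by omega)]; simp
  have hgfrs : ∀ i, ¬ (i < N + 2) → g i = frs F i := by
    intro i hi
    rw [hgdef]; simp only
    rw [if_neg (by omega), if_neg (by omega), if_neg (by omega)]
  have hsub : ∀ i : ℕ, i < N + 2 → g i ⊆ insert (sstar F) (Upts H) := by
    intro i hi
    have hi' : i < N ∨ i = N ∨ i = N + 1 := by omega
    rcases hi' with h1 | rfl | rfl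
    · rw [hgl i h1]
      exact (Lline_subset_Upts H _).trans (Finset.subset_insert _ _)
    · rw [hgS]
      exact Aset_subset_insert H S
    · rw [hgS']
      exact Aset_subset_insert H S'
  refine ⟨fun v => g v.val, ?_, ?_, ?_⟩
  · -- cardinalities
    intro v
    show (g (v : ℕ)).card = q
    by_cases hv : (v : ℕ) < N + 2
    · have hv' : (v : ℕ) < N ∨ (v : ℕ) = N ∨ (v : ℕ) = N + 1 := by omega
      rcases hv' with h1 | h1 | h1
      · rw [hgl _ h1]
        exact card_Lline H h1H hmul hinv (hRmem _ (hRLmem h1)).1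
      · rw [h1, hgS, card_Aset H h1H hmul hinv, hScard, hHcard, Nat.mul_div_cancel' hdvd]
        omega
      · rw [h1, hgS', card_Aset H h1H hmul hinv, hS'card, hHcard, Nat.mul_div_cancel' hdvd]
        omega
    · rw [hgfrs _ hv]
      exact card_frs _
  · -- pairwise intersections
    have key : ∀ i j : ℕ, i ≠ j → (g i ∩ g j).card ≤ c := by
      have main : ∀ i j : ℕ, i ≠ j → i < N + 2 → (g i ∩ g j).card ≤ c := by
        intro i j hij hi
        by_cases hj : j < N + 2
        · have hi' : i < N ∨ i = N ∨ i = N + 1 := by omega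
          have hj' : j < N ∨ j = N ∨ j = N + 1 := by omega
          rcases hi' with h1 | rfl | rfl <;> rcases hj' with h2 | h2 | h2
          · rw [hgl i h1, hgl j h2, ← hHcard]
            apply card_Lline_inter_le H h1H hmul hinv (hRmem _ (hRLmem h1)).2
              (hRmem _ (hRLmem h2)).2
            intro heq
            exact hij (getR_inj hRLnd (by omega) (by omega) heq)
          · rw [hgl i h1, h2, hgS, ← hScard]
            exact Lline_inter_Aset_le H h1H hmul hinv _ S
          · rw [hgl i h1, h2, hgS', ← hS'card]
            exact Lline_inter_Aset_le H h1H hmul hinv _ S'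
          · rw [hgl j h2, hgS, Finset.inter_comm, ← hScard]
            exact Lline_inter_Aset_le H h1H hmul hinv _ S
          · omega
          · rw [h2, hgS, hgS']
            exact le_trans (Aset_inter_Aset_le H h1H hmul hinv hSS') hc
          · rw [hgl j h2, hgS', Finset.inter_comm, ← hS'card]
            exact Lline_inter_Aset_le H h1H hmul hinv _ S'
          · rw [h2, hgS, hgS', Finset.inter_comm]
            exact le_trans (Aset_inter_Aset_le H h1H hmul hinv hSS') hc
          · omega
        · have hdis : Disjoint (g i) (g j) := by
            rw [Finset.disjoint_left]
            intro a ha ha'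
            have h1 := mem_insert_le H (hsub i hi ha)
            rw [hgfrs j hj] at ha'
            exact absurd (frs_elem_big ha') (by omega)
          rw [Finset.card_eq_zero.2 (Finset.disjoint_iff_inter_eq_empty.1 hdis)]
          omega
      intro i j hij
      by_cases hi : i < N + 2
      · exact main i j hij hi
      · by_cases hj : j < N + 2
        · rw [Finset.inter_comm]
          exact main j i hij.symm hj
        · rw [hgfrs i hi, hgfrs j hj, Finset.card_eq_zero.2
            (Finset.disjoint_iff_inter_eq_empty.1 (frs_disjoint hij))]
          omega
    intro u v huv
    exact key u.val v.val (fun h => huv (Fin.ext h))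

  · -- no proper coloring
    rintro ⟨f, hfinj, hfmem⟩
    have hn0 : 0 < n := by omega
    set T : Finset (Fin n) := Finset.univ.filter (fun v => (v : ℕ) < N + 2) with hTdef
    have hTcard : T.card = N + 2 := by
      have : T.card = (Finset.range (N + 2)).card := by
        refine Finset.card_nbij' (fun v => (v : ℕ))
          (fun k => (⟨k % n, Nat.mod_lt _ hn0⟩ : Fin n)) ?_ ?_ ?_ ?_
        · intro a ha
          rw [hTdef, Finset.mem_coe, Finset.mem_filter] at ha
          rw [Finset.mem_coe, Finset.mem_range]
          exact ha.2
        · intro a ha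
          rw [Finset.mem_coe, Finset.mem_range] at ha
          rw [hTdef, Finset.mem_coe, Finset.mem_filter]
          refine ⟨Finset.mem_univ _, ?_⟩
          simp only
          rw [Nat.mod_eq_of_lt (by omega)]
          exact ha
        · intro a _
          apply Fin.ext
          simp only
          rw [Nat.mod_eq_of_lt a.isLt]
        · intro a ha
          rw [Finset.mem_coe, Finset.mem_range] at ha
          simp only
          rw [Nat.mod_eq_of_lt (by omega)]
      rw [this, Finset.card_range]
    have himg : T.image f ⊆ insert (sstar F) (Upts H) := by
      intro a ha
      obtain ⟨v, hv, rfl⟩ := Finset.mem_image.1 ha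
      rw [hTdef, Finset.mem_filter] at hv
      exact hsub v.val hv.2 (hfmem v)
    have hcard1 : (T.image f).card = N + 2 := by
      rw [Finset.card_image_of_injective _ hfinj, hTcard]
    have hcard2 : (insert (sstar F) (Upts H)).card = N + 1 := by
      rw [Finset.card_insert_of_notMem (sstar_not_mem_Upts H), hNdef]
    have := Finset.card_le_card himg
    omega

end ChiAux

open ChiAux in
/-- Lower bound for `χ_l(K_n, c)`: if `q` is a prime power, `c < q − 1`,
`c ∣ q − 1`, and `n ≥ (q² − 1)/c + 2`, then there exists a `(q, c)`-list
assignment on `K_n` admitting no proper coloring, i.e. `χ_l(K_n, c) ≥ q + 1`. -/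
theorem chi_list_lower_bound (q c n : ℕ)
    (hq : IsPrimePow q) (hc : 0 < c) (hlt : c < q - 1) (hdvd : c ∣ q - 1)
    (hn : (q ^ 2 - 1) / c + 2 ≤ n) :
    ∃ L : Fin n → Finset ℕ,
      (∀ v, (L v).card = q) ∧
      (∀ u v, u ≠ v → ((L u) ∩ (L v)).card ≤ c) ∧
      ¬ ∃ f : Fin n → ℕ, Function.Injective f ∧ ∀ v, f v ∈ L v := by
  classical
  obtain ⟨p, e, hp, he, rfl⟩ := hq
  haveI : Fact (Nat.Prime p) := ⟨hp.nat_prime⟩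
  set F := GaloisField p e with hFdef
  haveI : Fintype F := Fintype.ofFinite F
  haveI : DecidableEq F := Classical.decEq F
  have hcard : Fintype.card F = p ^ e := by
    rw [← Nat.card_eq_fintype_card]
    exact GaloisField.card p e he.ne'
  set q := p ^ e with hqdef
  have hq2 : 2 ≤ q - 1 := by omega
  have hq0 : 0 < q := by omega
  -- the subgroup of order c
  obtain ⟨g, hg⟩ := IsCyclic.exists_generator (α := Fˣ)
  have hog : orderOf g = q - 1 := by
    rw [orderOf_eq_card_of_forall_mem_zpowers hg, Nat.card_eq_fintype_card,
      Fintype.card_units, hcard]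
  have hoh : orderOf (g ^ ((q - 1) / c)) = c := by
    rw [← hog]
    exact orderOf_pow_orderOf_div (by omega) (hog ▸ hdvd)
  set h := g ^ ((q - 1) / c) with hhdef
  set H : Finset Fˣ := (Finset.range c).image (h ^ ·) with hHdef
  have hmemH : ∀ i : ℕ, h ^ i ∈ H := by
    intro i
    rw [hHdef]
    refine Finset.mem_image.2 ⟨i % c, Finset.mem_range.2 (Nat.mod_lt _ hc), ?_⟩
    conv_lhs => rw [show i % c = i % orderOf h from by rw [hoh]]
    exact pow_mod_orderOf h i
  have h1H : (1 : Fˣ) ∈ H := by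
    have := hmemH 0
    rwa [pow_zero] at this
  have hmul : ∀ a ∈ H, ∀ b ∈ H, a * b ∈ H := by
    intro a ha b hb
    rw [hHdef, Finset.mem_image] at ha hb
    obtain ⟨i, _, rfl⟩ := ha
    obtain ⟨j, _, rfl⟩ := hb
    rw [← pow_add]
    exact hmemH _
  have hpowc : h ^ c = 1 := by rw [← hoh]; exact pow_orderOf_eq_one h
  have hinv : ∀ a ∈ H, a⁻¹ ∈ H := by
    intro a ha
    rw [hHdef, Finset.mem_image] at ha
    obtain ⟨i, _, rfl⟩ := ha
    have : (h ^ i) * (h ^ (i * (c - 1))) = 1 := by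
      rw [← pow_add]
      have heq : i + i * (c - 1) = i * c := by
        obtain ⟨d, rfl⟩ : ∃ d, c = d + 1 := ⟨c - 1, by omega⟩
        rw [show d + 1 - 1 = d from rfl, Nat.mul_succ]
        omega
      rw [heq, Nat.mul_comm i c, pow_mul, hpowc, one_pow]
    rw [inv_eq_of_mul_eq_one_right this]
    exact hmemH _
  have hHcard : H.card = c := by
    rw [hHdef, Finset.card_image_of_injOn, Finset.card_range]
    intro i hi j hj hij
    rw [Finset.coe_range] at hi hj
    exact pow_injOn_Iio_orderOf (by rwa [hoh]) (by rwa [hoh]) hij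
  -- arithmetic side conditions
  have h2c : 2 * c ≤ Fintype.card F := by
    rw [hcard]
    obtain ⟨k, hk⟩ := hdvd
    have hk2 : 2 ≤ k := by
      rcases Nat.lt_or_ge k 2 with hk' | hk'
      · interval_cases k <;> omega
      · exact hk'
    have : 2 * c ≤ c * k := by
      calc 2 * c = c * 2 := by ring
        _ ≤ c * k := Nat.mul_le_mul_left c hk2
    omega
  obtain ⟨L, hL1, hL2, hL3⟩ := construction (F := F) c n hc H h1H hmul hinv hHcard
    (by rw [hcard]; exact hdvd) h2c (by rw [hcard]; exact hn)
  exact ⟨L, fun v => by rw [hL1 v, hcard], hL2, hL3⟩
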